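/- Fix the linear order N < E < D on steps. Let φ map a bad Delannoy path W in Del(n,n,l) to the path obtained by replacing its first deepest step with E (depth after step i = #N − #E in the first i steps). Then φ is a bijection onto Del(n+1,n-1,l) and maj(W) = maj(φ(W)) for all bad W. -/

import Mathlib

inductive Step : Type
  | E | D | N
deriving DecidableEq

instance : Fintype Step :=
  ⟨{Step.E, Step.D, Step.N}, fun x => by cases x <;> simp⟩

open Step Polynomial

/-- All words of length `l` over the step alphabet. -/
def Words (l : ℕ) : Finset (List Step) :=
  (Finset.univ : Finset (Fin l → Step)).image List.ofFn

/-- Delannoy paths from (0,0) to (m,n) with `l` steps, encoded as words: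
`#E + #D = m`, `#N + #D = n`, length `l`. -/
def DelSet (m n l : ℕ) : Finset (List Step) :=
  (Words l).filter fun w => w.count E + w.count D = m ∧ w.count N + w.count D = n

/-- A word is bad if some prefix contains more N's than E's. -/
def bad (w : List Step) : Bool :=
  (List.range (w.length + 1)).any fun k => (w.take k).count E < (w.take k).count N

/-- Bad Delannoy paths from (0,0) to (n,n) with `l` steps. -/
def BDelSet (n l : ℕ) : Finset (List Step) :=
  (DelSet n n l).filter fun w => bad w

/-- Schröder paths: Delannoy paths to (n,n) never going above the diagonal. -/
def SchSet (n l : ℕ) : Finset (List Step) :=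
  (DelSet n n l).filter fun w => ¬ bad w

/-- Major index of a word w_1 ⋯ w_l with respect to a ranking of the letters:
the sum of all positions i (1 ≤ i ≤ l-1) with w_i > w_{i+1}. -/
def maj (rank : Step → ℕ) (w : List Step) : ℕ :=
  ∑ i ∈ Finset.range (w.length - 1),
    if rank (w.getD (i + 1) E) < rank (w.getD i E) then i + 1 else 0

/-- q-integer [m] = 1 + q + ⋯ + q^{m-1}. -/
noncomputable def qint (m : ℕ) : Polynomial ℚ :=
  ∑ i ∈ Finset.range m, X ^ i

/-- q-factorial. -/
noncomputable def qfact : ℕ → Polynomial ℚ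
  | 0 => 1
  | m + 1 => qfact m * qint (m + 1)

/-- Gaussian binomial coefficient, via the q-Pascal recurrence. -/
noncomputable def qbinom : ℕ → ℕ → Polynomial ℚ
  | _, 0 => 1
  | 0, _ + 1 => 0
  | m + 1, k + 1 => qbinom m k + X ^ (k + 1) * qbinom m (k + 1)

/-- q-trinomial coefficient [l]!/([a]![b]![c]!), defined when a+b+c = l. -/
noncomputable def qbinom3 (l a b c : ℕ) : Polynomial ℚ :=
  if a + b + c = l then qbinom l a * qbinom (l - a) b else 0

/-- Depth after the first `i` steps: #N − #E. -/
def depth (w : List Step) (i : ℕ) : ℤ :=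
  ((w.take i).count N : ℤ) - (w.take i).count E

/-- `k` (0 ≤ k ≤ l) achieves the maximal running depth. -/
def isMaxDepth (w : List Step) (k : ℕ) : Bool :=
  (List.range (w.length + 1)).all fun i => decide (depth w i ≤ depth w k)

/-- The first index (number of steps) at which the running depth is maximal. -/
def firstDeep (w : List Step) : ℕ :=
  (List.range (w.length + 1)).findIdx (isMaxDepth w)

/-- The last index at which the running depth is maximal. -/
def lastDeep (w : List Step) : ℕ :=
  w.length - (List.range (w.length + 1)).reverse.findIdx (isMaxDepth w)

/-- Replace the first deepest step (the step w_k, k = firstDeep) with E. -/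
def phi (w : List Step) : List Step := w.set (firstDeep w - 1) E

/-- Replace the step following the last deepest point with N. -/
def phiInv (w : List Step) : List Step := w.set (lastDeep w) N

/-- Number of consecutive D's immediately after the first deepest step. -/
def runS (w : List Step) : ℕ := ((w.drop (firstDeep w)).takeWhile (· == D)).length

/-- Number of consecutive D's immediately before the first deepest step. -/
def runR (w : List Step) : ℕ :=
  ((w.take (firstDeep w - 1)).reverse.takeWhile (· == D)).length

/-- The window map: replace W₁ = D^r w_k D^s by D^{r-1} E D^{s+1} if r ≥ 1,
and by D^s E if r = 0. -/
def phiWin (w : List Step) : List Step :=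
  let k := firstDeep w - 1
  let r := runR w
  let s := runS w
  let seg : List Step :=
    if 1 ≤ r then List.replicate (r - 1) D ++ [E] ++ List.replicate (s + 1) D
    else List.replicate s D ++ [E]
  w.take (k - r) ++ seg ++ w.drop (k + s + 1)

/-- 0-based index of the first step after which the path is above the diagonal. -/
def firstAbove (w : List Step) : ℕ :=
  (List.range w.length).findIdx fun i =>
    decide ((w.take (i + 1)).count E < (w.take (i + 1)).count N)

/-- The map ψ of Bonin–Shapiro–Simion: replace with E the last N of the maximal
run of consecutive N's beginning at the first step going above the diagonal. -/
def psi (w : List Step) : List Step :=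
  let i := firstAbove w
  let j := i + ((w.drop i).takeWhile (· == N)).length - 1
  w.set j E

namespace Aux

def dstep : Step → ℤ | N => 1 | E => -1 | D => 0

lemma mem_Words {l : ℕ} {w : List Step} : w ∈ Words l ↔ w.length = l := by
  constructor
  · intro h
    simp only [Words, Finset.mem_image] at h
    obtain ⟨g, _, rfl⟩ := h; simp
  · rintro rfl
    simp only [Words, Finset.mem_image]
    exact ⟨w.get, Finset.mem_univ _, List.ofFn_get w⟩

lemma mem_DelSet {m n l : ℕ} {w : List Step} :
    w ∈ DelSet m n l ↔ w.length = l ∧ w.count E + w.count D = m ∧ w.count N + w.count D = n := by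
  rw [DelSet, Finset.mem_filter, mem_Words]


lemma depth_zero (w : List Step) : depth w 0 = 0 := by simp [depth]

lemma depth_succ (w : List Step) {i : ℕ} (h : i < w.length) :
    depth w (i + 1) = depth w i + dstep (w[i]) := by
  have ht : w.take (i+1) = w.take i ++ [w[i]] := by
    rw [List.take_succ, List.getElem?_eq_getElem h]; rfl
  rw [depth, depth, ht]
  cases hx : w[i] <;> simp [List.count_append, dstep, hx] <;> push_cast <;> ring

lemma bad_iff (w : List Step) : bad w = true ↔ ∃ k ≤ w.length, 0 < depth w k := by
  simp [bad, List.any_eq_true, List.mem_range, Nat.lt_succ_iff, depth, sub_pos, Nat.cast_lt]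

lemma isMaxDepth_iff (w : List Step) (k : ℕ) :
    isMaxDepth w k = true ↔ ∀ i ≤ w.length, depth w i ≤ depth w k := by
  simp [isMaxDepth, List.all_eq_true, List.mem_range, Nat.lt_succ_iff]

lemma exists_max (w : List Step) : ∃ k ≤ w.length, isMaxDepth w k = true := by
  obtain ⟨b, hb, hmax⟩ := (Finset.range (w.length + 1)).exists_max_image (depth w)
    ⟨0, Finset.mem_range.2 (Nat.succ_pos _)⟩
  refine ⟨b, Nat.lt_succ_iff.1 (Finset.mem_range.1 hb), (isMaxDepth_iff w b).2 ?_⟩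
  intro i hi
  exact hmax i (Finset.mem_range.2 (Nat.lt_succ_of_le hi))

lemma firstDeep_lt_length (w : List Step) :
    (List.range (w.length + 1)).findIdx (isMaxDepth w) < w.length + 1 := by
  obtain ⟨k, hk, hmax⟩ := exists_max w
  have : k ∈ List.range (w.length + 1) := List.mem_range.2 (Nat.lt_succ_of_le hk)
  simpa using List.findIdx_lt_length_of_exists ⟨k, this, hmax⟩

lemma firstDeep_le (w : List Step) : firstDeep w ≤ w.length :=
  Nat.lt_succ_iff.1 (by simpa [firstDeep] using firstDeep_lt_length w)

lemma firstDeep_isMax (w : List Step) : isMaxDepth w (firstDeep w) = true := by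
  have h := firstDeep_lt_length w
  have := List.findIdx_getElem (p := isMaxDepth w) (xs := List.range (w.length + 1))
    (w := by simpa using h)
  rwa [List.getElem_range] at this

lemma firstDeep_min (w : List Step) {j : ℕ} (h : j < firstDeep w) :
    isMaxDepth w j = false := by
  have hj : j < (List.range (w.length + 1)).length := by
    simp; exact Nat.lt_succ_iff.1 (lt_of_lt_of_le h (Nat.le_succ_of_le (firstDeep_le w)))
  have := List.not_of_lt_findIdx (p := isMaxDepth w) (xs := List.range (w.length + 1))
    (i := j) h
  rwa [List.getElem_range] at this

lemma depth_lt_of_not_max (w : List Step) {j k : ℕ} (hk : isMaxDepth w k = true)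
    (hj : isMaxDepth w j = false) (hjl : j ≤ w.length) : depth w j < depth w k := by
  rw [← Bool.not_eq_true] at hj
  rw [isMaxDepth_iff] at hj hk
  push_neg at hj
  obtain ⟨i, hi, hlt⟩ := hj
  exact lt_of_lt_of_le hlt (hk i hi)

lemma firstDeep_strict (w : List Step) {j : ℕ} (h : j < firstDeep w) :
    depth w j < depth w (firstDeep w) :=
  depth_lt_of_not_max w (firstDeep_isMax w) (firstDeep_min w h)
    (le_trans (Nat.le_of_lt h) (firstDeep_le w))

lemma firstDeep_eq (w : List Step) {k : ℕ} (hk : k ≤ w.length)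
    (h1 : isMaxDepth w k = true) (h2 : ∀ j < k, isMaxDepth w j = false) :
    firstDeep w = k := by
  rw [firstDeep, List.findIdx_eq (by simpa using Nat.lt_succ_of_le hk)]
  refine ⟨by rwa [List.getElem_range], ?_⟩
  intro j hj
  rw [List.getElem_range]
  exact h2 j hj

lemma lastDeep_eq (w : List Step) {k : ℕ} (hk : k ≤ w.length)
    (h1 : isMaxDepth w k = true) (h2 : ∀ j, k < j → j ≤ w.length → isMaxDepth w j = false) :
    lastDeep w = k := by
  have hrev : (List.range (w.length + 1)).reverse.findIdx (isMaxDepth w) = w.length - k := by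
    rw [List.findIdx_eq (by simp)]
    constructor
    · rw [List.getElem_reverse, List.getElem_range]
      have : (List.range (w.length + 1)).length - 1 - (w.length - k) = k := by simp; omega
      rwa [this]
    · intro j hj
      rw [List.getElem_reverse, List.getElem_range]
      have hjlen : j < (List.range (w.length + 1)).length := by simp; omega
      have : (List.range (w.length + 1)).length - 1 - j = w.length - j := by simp
      rw [this]
      exact h2 _ (by omega) (by omega)
  rw [lastDeep, hrev]; omega

lemma revIdx_lt (w : List Step) :
    (List.range (w.length + 1)).reverse.findIdx (isMaxDepth w) < w.length + 1 := by
  obtain ⟨k, hk, hmax⟩ := exists_max w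
  have hmem : k ∈ (List.range (w.length + 1)).reverse := by
    rw [List.mem_reverse]; exact List.mem_range.2 (Nat.lt_succ_of_le hk)
  simpa using List.findIdx_lt_length_of_exists ⟨k, hmem, hmax⟩

lemma lastDeep_isMax (w : List Step) : isMaxDepth w (lastDeep w) = true := by
  have h := revIdx_lt w
  have hg := List.findIdx_getElem (p := isMaxDepth w)
    (xs := (List.range (w.length + 1)).reverse) (w := by simpa using h)
  rw [List.getElem_reverse, List.getElem_range] at hg
  have : (List.range (w.length + 1)).length - 1 -
      (List.range (w.length + 1)).reverse.findIdx (isMaxDepth w) = lastDeep w := by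
    simp [lastDeep]
  rwa [this] at hg

lemma lastDeep_le (w : List Step) : lastDeep w ≤ w.length := by
  simp [lastDeep]

lemma lastDeep_strict (w : List Step) {j : ℕ} (h : lastDeep w < j) (hj : j ≤ w.length) :
    depth w j < depth w (lastDeep w) := by
  have hidx := revIdx_lt w
  have hp : w.length - j < (List.range (w.length + 1)).reverse.findIdx (isMaxDepth w) := by
    simp [lastDeep] at h; omega
  have hf := List.not_of_lt_findIdx (p := isMaxDepth w)
    (xs := (List.range (w.length + 1)).reverse) hp
  rw [List.getElem_reverse, List.getElem_range] at hf
  have hjj : (List.range (w.length + 1)).length - 1 - (w.length - j) = j := by simp; omega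
  rw [hjj] at hf
  exact depth_lt_of_not_max w (lastDeep_isMax w) hf hj


lemma take_set_of_le (w : List Step) {i j : ℕ} (a : Step) (h : i ≤ j) :
    (w.set j a).take i = w.take i := by
  apply List.ext_getElem (by simp)
  intro m h1 h2
  simp only [List.length_take, List.length_set, lt_min_iff] at h1
  rw [List.getElem_take, List.getElem_take, List.getElem_set_ne (by omega)]

lemma depth_set_le (w : List Step) {i j : ℕ} (a : Step) (h : i ≤ j) :
    depth (w.set j a) i = depth w i := by
  rw [depth, depth, take_set_of_le w a h]

def fdep (u : List Step) : ℤ := (u.count N : ℤ) - u.count E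

lemma fdep_mid (u v : List Step) (b : Step) : fdep (u ++ b :: v) = fdep u + dstep b + fdep v := by
  cases b <;> simp [fdep, List.count_append, List.count_cons, dstep] <;> push_cast <;> ring

lemma take_mid (w : List Step) {i j : ℕ} (hj : j < w.length) (h : j < i) (b : Step) :
    (w.take j ++ b :: w.drop (j+1)).take i = w.take j ++ b :: (w.drop (j+1)).take (i - j - 1) := by
  rw [List.take_append]
  have hl : (w.take j).length = j := by rw [List.length_take]; omega
  rw [hl]
  congr 1
  · rw [List.take_take]; congr 1; omega
  · have : i - j = (i - j - 1) + 1 := by omega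
    rw [this, List.take_succ_cons]
    simp

lemma depth_set_gt (w : List Step) {i j : ℕ} (a : Step) (hj : j < w.length) (h : j < i) :
    depth (w.set j a) i = depth w i + dstep a - dstep (w[j]) := by
  have h1 : w.set j a = w.take j ++ a :: w.drop (j+1) :=
    List.set_eq_take_cons_drop a hj
  have h2 : w = w.take j ++ w[j] :: w.drop (j+1) := by
    conv_lhs => rw [← List.take_append_drop j w, List.drop_eq_getElem_cons hj]
  have e1 : depth (w.set j a) i = fdep (w.take j) + dstep a + fdep ((w.drop (j+1)).take (i - j - 1)) := by
    rw [show depth (w.set j a) i = fdep ((w.set j a).take i) from rfl, h1,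
      take_mid w hj h, fdep_mid]
  have e2 : depth w i = fdep (w.take j) + dstep (w[j]) + fdep ((w.drop (j+1)).take (i - j - 1)) := by
    rw [show depth w i = fdep (w.take i) from rfl]
    conv_lhs => rw [h2]
    rw [take_mid w hj h, fdep_mid]
  rw [e1, e2]; ring

lemma count_set_gen (w : List Step) {j : ℕ} (hj : j < w.length) (a c : Step) :
    (w.set j a).count c + [w[j]].count c = w.count c + [a].count c := by
  have h2 : w = w.take j ++ w[j] :: w.drop (j+1) := by
    conv_lhs => rw [← List.take_append_drop j w, List.drop_eq_getElem_cons hj]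
  rw [List.set_eq_take_cons_drop a hj]
  conv_rhs => rw [h2]
  simp only [List.count_append, List.count_cons, beq_iff_eq]
  omega

lemma set_self (w : List Step) {j : ℕ} {a : Step} (h : j < w.length) (ha : w[j] = a) :
    w.set j a = w := by
  apply List.ext_getElem (by simp)
  intro m h1 h2
  rw [List.getElem_set]
  split
  · next heq => subst heq; exact ha.symm
  · rfl

lemma maj_set (rank : Step → ℕ) (hNE : rank N < rank E) (hED : rank E < rank D)
    (w : List Step) {j : ℕ} (hj : j < w.length) (hwj : w[j] = N)
    (hprev : ∀ h : 0 < j, w[j-1]'(by omega) ≠ E)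
    (hnext : ∀ h : j + 1 < w.length, w[j+1]'h ≠ N) :
    maj rank w = maj rank (w.set j E) := by
  unfold maj
  rw [List.length_set]
  apply Finset.sum_congr rfl
  intro i hi
  rw [Finset.mem_range] at hi
  have hi0 : i < w.length := by omega
  have hi1 : i + 1 < w.length := by omega
  rw [List.getD_eq_getElem w E hi0, List.getD_eq_getElem w E hi1,
      List.getD_eq_getElem (w.set j E) E (by simp only [List.length_set]; omega),
      List.getD_eq_getElem (w.set j E) E (by simp only [List.length_set]; omega),
      List.getElem_set, List.getElem_set]
  by_cases h1 : j = i + 1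
  · subst h1
    rw [if_pos rfl, if_neg (show ¬(i + 1 = i) by omega)]
    have hp : w[i] ≠ E := by
      have := hprev (by omega)
      simpa using this
    rw [hwj]
    cases hx : w[i] with
    | N => simp [hx, lt_irrefl, Nat.lt_asymm hNE]
    | E => exact absurd hx hp
    | D => simp [hx, hNE.trans hED, hED]
  · by_cases h2 : j = i
    · subst h2
      rw [if_pos rfl, if_neg (Nat.lt_succ_self _).ne]
      have hn : w[j+1] ≠ N := hnext hi1
      rw [hwj]
      cases hx : w[j+1] with
      | N => exact absurd hx hn
      | E => simp [hx, lt_irrefl, Nat.lt_asymm hNE]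
      | D => simp [hx, Nat.lt_asymm (hNE.trans hED), Nat.lt_asymm hED]
    · rw [if_neg h1, if_neg h2]


lemma getElem_idx_eq (w : List Step) {i j : ℕ} (e : i = j) (hi : i < w.length) :
    w[i]'hi = w[j]'(e ▸ hi) := by subst e; rfl

lemma main_A {n l : ℕ} {w : List Step} (hw : w ∈ BDelSet n l)
    (rank : Step → ℕ) (hNE : rank N < rank E) (hED : rank E < rank D) :
    phi w ∈ DelSet (n + 1) (n - 1) l ∧ phiInv (phi w) = w ∧
      maj rank w = maj rank (phi w) := by
  rw [BDelSet, Finset.mem_filter, mem_DelSet] at hw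
  obtain ⟨⟨hlen, hE, hN⟩, hbad⟩ := hw
  set K := firstDeep w with hKdef
  obtain ⟨k0, hk0, hk0pos⟩ := (bad_iff w).1 hbad
  have hmax := (isMaxDepth_iff w K).1 (firstDeep_isMax w)
  have hMpos : 0 < depth w K := lt_of_lt_of_le hk0pos (hmax k0 hk0)
  have hK1 : 1 ≤ K := by
    by_contra h
    have h0 : K = 0 := by omega
    rw [h0, depth_zero] at hMpos
    exact lt_irrefl _ hMpos
  have hKle : K ≤ w.length := firstDeep_le w
  have hKlt : K - 1 < w.length := by omega
  have hsucc : depth w K = depth w (K - 1) + dstep (w[K - 1]) := by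
    have := depth_succ w hKlt
    rwa [show K - 1 + 1 = K by omega] at this
  have hstrict : depth w (K - 1) < depth w K := firstDeep_strict w (by omega)
  have hwN : w[K - 1]'hKlt = N := by
    cases hx : w[K - 1]'hKlt with
    | N => rfl
    | E => rw [hx] at hsucc; simp [dstep] at hsucc; omega
    | D => rw [hx] at hsucc; simp [dstep] at hsucc; omega
  have hdK1 : depth w (K - 1) = depth w K - 1 := by
    rw [hwN] at hsucc; simp [dstep] at hsucc; omega
  have hprevE : ∀ _ : 0 < K - 1, w[K - 1 - 1]'(by omega) ≠ E := by
    intro h0 hEq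
    have h2lt : K - 2 < w.length := by omega
    have hs2 : depth w (K - 1) = depth w (K - 2) + dstep (w[K - 2]) := by
      have := depth_succ w h2lt
      rwa [show K - 2 + 1 = K - 1 by omega] at this
    have hEq' : w[K - 2]'h2lt = E := by
      rw [← getElem_idx_eq w (show K - 1 - 1 = K - 2 from by omega) (by omega)]
      exact hEq
    rw [hEq'] at hs2; simp [dstep] at hs2
    have hlt2 : depth w (K - 2) < depth w K := firstDeep_strict w (by omega)
    omega
  have hnextN : ∀ h : (K - 1) + 1 < w.length, w[(K - 1) + 1]'h ≠ N := by
    intro h hEq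
    have hKlt2 : K < w.length := by omega
    have hEq' : w[K]'hKlt2 = N := by
      rw [← getElem_idx_eq w (show K - 1 + 1 = K from by omega) (by omega)]
      exact hEq
    have hs : depth w (K + 1) = depth w K + dstep (w[K]) := depth_succ w hKlt2
    rw [hEq'] at hs; simp [dstep] at hs
    have := hmax (K + 1) (by omega)
    omega
  set v := w.set (K - 1) E with hvdef
  have hphi : phi w = v := rfl
  have hvlen : v.length = w.length := List.length_set ..
  -- counts
  have hcE := count_set_gen w hKlt E E
  have hcN := count_set_gen w hKlt E N
  have hcD := count_set_gen w hKlt E D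
  rw [hwN] at hcE hcN hcD
  simp at hcE hcN hcD
  -- depth of v
  have hdv : ∀ i ≤ K - 1, depth v i = depth w i := fun i hi => depth_set_le w E hi
  have hdv2 : ∀ i, K - 1 < i → depth v i = depth w i - 2 := by
    intro i hi
    have := depth_set_gt w E hKlt hi
    rw [hwN] at this; simp [dstep] at this; rw [hvdef]; omega
  have hvmax : isMaxDepth v (K - 1) = true := by
    rw [isMaxDepth_iff]
    intro i hi
    rw [hvlen] at hi
    rw [hdv (K - 1) le_rfl]
    rcases le_or_gt i (K - 1) with h | h
    · rw [hdv i h]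
      rcases eq_or_lt_of_le h with rfl | h'
      · exact le_rfl
      · have h5 : depth w i < depth w K := firstDeep_strict w (by omega)
        omega
    · rw [hdv2 i h]
      have := hmax i hi
      omega
  have hvafter : ∀ j, K - 1 < j → j ≤ w.length → isMaxDepth v j = false := by
    intro j hj hjl
    rw [← Bool.not_eq_true, isMaxDepth_iff]
    push_neg
    refine ⟨K - 1, by omega, ?_⟩
    rw [hdv (K - 1) le_rfl, hdv2 j hj]
    have := hmax j hjl
    omega
  have hlast : lastDeep v = K - 1 :=
    lastDeep_eq v (by omega) hvmax (fun j hj hjl => hvafter j hj (by omega))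
  refine ⟨?_, ?_, ?_⟩
  · rw [hphi, hvdef, mem_DelSet]
    refine ⟨by rw [List.length_set]; exact hlen, by omega, by omega⟩
  · rw [hphi, phiInv, hlast, hvdef, List.set_set]
    exact set_self w hKlt hwN
  · rw [hphi, hvdef]
    exact maj_set rank hNE hED w hKlt hwN hprevE hnextN

lemma main_B {n l : ℕ} (hn : 1 ≤ n) {w : List Step} (hw : w ∈ DelSet (n + 1) (n - 1) l) :
    phiInv w ∈ BDelSet n l ∧ phi (phiInv w) = w := by
  rw [mem_DelSet] at hw
  obtain ⟨hlen, hE, hN⟩ := hw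
  set K := lastDeep w with hKdef
  have hmax := (isMaxDepth_iff w K).1 (lastDeep_isMax w)
  have hd0 : (0 : ℤ) ≤ depth w K := by
    have := hmax 0 (Nat.zero_le _)
    rwa [depth_zero] at this
  have hcEN : w.count E = w.count N + 2 := by omega
  have hdlen : depth w w.length = (w.count N : ℤ) - w.count E := by
    rw [depth, List.take_length]
  have hKlt : K < w.length := by
    rcases lt_or_eq_of_le (lastDeep_le w) with h | h
    · exact h
    · exfalso
      rw [← hKdef] at h
      rw [h, hdlen, hcEN] at hd0
      push_cast at hd0
      omega
  have hstrict : depth w (K + 1) < depth w K := lastDeep_strict w (by omega) (by omega)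
  have hsucc : depth w (K + 1) = depth w K + dstep (w[K]) := depth_succ w hKlt
  have hwE : w[K]'hKlt = E := by
    cases hx : w[K]'hKlt with
    | E => rfl
    | N => rw [hx] at hsucc; simp [dstep] at hsucc; omega
    | D => rw [hx] at hsucc; simp [dstep] at hsucc; omega
  set v := w.set K N with hvdef
  have hphiInv : phiInv w = v := rfl
  have hvlen : v.length = w.length := List.length_set ..
  have hcE := count_set_gen w hKlt N E
  have hcN := count_set_gen w hKlt N N
  have hcD := count_set_gen w hKlt N D
  rw [hwE] at hcE hcN hcD
  simp at hcE hcN hcD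
  have hdv : ∀ i ≤ K, depth v i = depth w i := fun i hi => depth_set_le w N hi
  have hdv2 : ∀ i, K < i → depth v i = depth w i + 2 := by
    intro i hi
    have := depth_set_gt w N hKlt hi
    rw [hwE] at this; simp [dstep] at this; rw [hvdef]; omega
  have hvK1 : depth v (K + 1) = depth w K + 1 := by
    rw [hdv2 (K + 1) (by omega)]
    rw [hwE] at hsucc; simp [dstep] at hsucc
    omega
  have hvmax : isMaxDepth v (K + 1) = true := by
    rw [isMaxDepth_iff]
    intro i hi
    rw [hvlen] at hi
    rw [hvK1]
    rcases le_or_gt i K with h | h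
    · rw [hdv i h]
      have := hmax i (by omega)
      omega
    · rw [hdv2 i h]
      have h5 : depth w i < depth w K := lastDeep_strict w h hi
      omega
  have hvbefore : ∀ j, j < K + 1 → isMaxDepth v j = false := by
    intro j hj
    rw [← Bool.not_eq_true, isMaxDepth_iff]
    push_neg
    refine ⟨K + 1, by omega, ?_⟩
    rw [hvK1, hdv j (by omega)]
    have := hmax j (by omega)
    omega
  have hfirst : firstDeep v = K + 1 :=
    firstDeep_eq v (by omega) hvmax hvbefore
  constructor
  · rw [hphiInv, hvdef, BDelSet, Finset.mem_filter, mem_DelSet]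
    refine ⟨⟨by rw [List.length_set]; exact hlen, by omega, by omega⟩, ?_⟩
    rw [bad_iff]
    refine ⟨K + 1, by rw [List.length_set]; omega, ?_⟩
    rw [← hvdef, hvK1]
    omega
  · rw [hphiInv, phi, hfirst]
    simp only [Nat.add_sub_cancel]
    rw [hvdef, List.set_set]
    exact set_self w hKlt hwE

end Aux

/-- for the order N < E < D, replacing the first deepest step of a
bad path with E is a bijection from bad paths in Del(n,n,l) onto
Del(n+1,n-1,l), and maj(W) = maj(φ(W)). -/
theorem phi_bijOn_NED (n l : ℕ) (hn : 1 ≤ n)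
    (rank : Step → ℕ) (hrank : Function.Injective rank)
    (hNE : rank N < rank E) (hED : rank E < rank D) :
    Set.BijOn phi (BDelSet n l : Set (List Step)) (DelSet (n + 1) (n - 1) l : Set (List Step)) ∧
      ∀ w ∈ BDelSet n l, maj rank w = maj rank (phi w) := by
  constructor
  · refine ⟨?_, ?_, ?_⟩
    · intro w hw
      exact (Aux.main_A (Finset.mem_coe.1 hw) rank hNE hED).1
    · intro a ha b hb hab
      have h1 := (Aux.main_A (Finset.mem_coe.1 ha) rank hNE hED).2.1
      have h2 := (Aux.main_A (Finset.mem_coe.1 hb) rank hNE hED).2.1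
      rw [← h1, hab, h2]
    · intro w' hw'
      obtain ⟨h1, h2⟩ := Aux.main_B hn (Finset.mem_coe.1 hw')
      exact ⟨phiInv w', h1, h2⟩
  · intro w hw
    exact (Aux.main_A hw rank hNE hED).2.2
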